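/- arXiv:1609.03250 — 4 statements merged into one kernel-verified Lean document; each statement's English description precedes it below -/
import Mathlib

section
/- Let Z_1,...,Z_n be i.i.d. random variables with 0 ≤ Z_i ≤ M, mean μ, and empirical mean μ̂ = (1/n)∑Z_i. For any ν > 0 and 0 < α < 1, P( |μ̂ - μ| / (ν + μ̂ + μ) > α ) < 2·exp(-α²νn/M). -/
open MeasureTheory ProbabilityTheory

lemma xlog_ge_one {x : ℝ} (hx : 1 ≤ x) :
    (x - 1) ^ 2 / (2 * x) ≤ x * Real.log x - x + 1 := by
  have hx0 : (0:ℝ) < x := lt_of_lt_of_le one_pos hx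
  have hnot : (0:ℝ) ∉ Set.uIcc (1:ℝ) x := by
    rw [Set.uIcc_of_le hx]
    intro h
    exact absurd h.1 (by norm_num)
  have h1 : ∀ t ∈ Set.Icc (1:ℝ) x, 1/2 - (t ^ (-2:ℤ))/2 ≤ Real.log t := by
    intro t ht
    have ht0 : (0:ℝ) < t := lt_of_lt_of_le one_pos ht.1
    have h2 := Real.log_le_sub_one_of_pos (x := t ^ (-2:ℤ)) (by positivity)
    rw [Real.log_zpow] at h2
    push_cast at h2
    linarith
  have hint1 : IntervalIntegrable (fun t : ℝ => 1/2 - (t ^ (-2:ℤ))/2)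
      MeasureTheory.volume 1 x := by
    exact (intervalIntegrable_const.sub ((intervalIntegral.intervalIntegrable_zpow (Or.inr hnot)).div_const 2))
  have hint2 : IntervalIntegrable Real.log MeasureTheory.volume 1 x :=
    intervalIntegral.intervalIntegrable_log hnot
  have hmono := intervalIntegral.integral_mono_on hx hint1 hint2 h1
  have ez : ∫ t in (1:ℝ)..x, t ^ (-2:ℤ) = 1 - x⁻¹ := by
    rw [integral_zpow (Or.inr ⟨by norm_num, hnot⟩)]
    norm_num
    ring
  have e1 : ∫ t in (1:ℝ)..x, (1/2 - (t ^ (-2:ℤ))/2) = (x - 1)/2 - (1 - x⁻¹)/2 := by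
    rw [intervalIntegral.integral_sub intervalIntegrable_const
      ((intervalIntegral.intervalIntegrable_zpow (Or.inr hnot)).div_const 2)]
    simp only [intervalIntegral.integral_div, ez, intervalIntegral.integral_const, integral_one, smul_eq_mul]
    ring
  have e2 : ∫ t in (1:ℝ)..x, Real.log t = x * Real.log x - x + 1 := by
    rw [integral_log]
    simp
  rw [e1, e2] at hmono
  have : (x - 1)/2 - (1 - x⁻¹)/2 = (x - 1) ^ 2 / (2 * x) := by
    field_simp
  linarith [hmono, this.symm.le]

lemma xlog_le_one {x : ℝ} (hx0 : 0 < x) (hx : x ≤ 1) :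
    (x - 1) ^ 2 / 2 ≤ x * Real.log x - x + 1 := by
  have h1 : ∀ t ∈ Set.Icc x 1, 1 - t ≤ -Real.log t := by
    intro t ht
    have ht0 : 0 < t := lt_of_lt_of_le hx0 ht.1
    have := Real.log_le_sub_one_of_pos ht0
    linarith
  have hnot : (0:ℝ) ∉ Set.uIcc x (1:ℝ) := by
    rw [Set.uIcc_of_le hx]
    intro h
    exact absurd h.1 (by linarith)
  have hint1 : IntervalIntegrable (fun t : ℝ => 1 - t) MeasureTheory.volume x 1 :=
    intervalIntegrable_const.sub intervalIntegral.intervalIntegrable_id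
  have hint2 : IntervalIntegrable (fun t : ℝ => -Real.log t) MeasureTheory.volume x 1 :=
    (intervalIntegral.intervalIntegrable_log hnot).neg
  have hmono := intervalIntegral.integral_mono_on hx hint1 hint2 h1
  have e1 : ∫ t in x..(1:ℝ), (1 - t) = (1 - x) - (1 - x^2)/2 := by
    rw [intervalIntegral.integral_sub intervalIntegrable_const
      intervalIntegral.intervalIntegrable_id, integral_id, intervalIntegral.integral_const]
    norm_num
  have e2 : ∫ t in x..(1:ℝ), -Real.log t = x * Real.log x - x + 1 := by
    rw [intervalIntegral.integral_neg, integral_log]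
    simp
    ring
  rw [e1, e2] at hmono
  nlinarith [hmono]

set_option maxHeartbeats 1000000

/-- Haussler's relative-deviation bound: for i.i.d. `Z₁,…,Zₙ` with `0 ≤ Zᵢ ≤ M`,
mean `μ` and empirical mean `μ̂`, and any `ν > 0`, `0 < α < 1`,
`P(|μ̂ - μ|/(ν + μ̂ + μ) > α) < 2·exp(-α²·ν·n/M)`. -/
theorem haussler_bound
    {Ω : Type*} [MeasureSpace Ω] [IsProbabilityMeasure (ℙ : Measure Ω)]
    (n : ℕ) (hn : 0 < n) (M : ℝ) (hM : 0 < M)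
    (Z : Fin n → Ω → ℝ)
    (hmeas : ∀ i, Measurable (Z i))
    (hbdd : ∀ i, ∀ ω, 0 ≤ Z i ω ∧ Z i ω ≤ M)
    (hindep : iIndepFun Z ℙ)
    (hident : ∀ i j, IdentDistrib (Z i) (Z j) ℙ ℙ)
    (μ : ℝ) (hμ : ∀ i, μ = ∫ ω, Z i ω)
    (ν α : ℝ) (hν : 0 < ν) (hα : 0 < α) (hα1 : α < 1) :
    (ℙ {ω | α < |(∑ i, Z i ω) / n - μ| / (ν + (∑ i, Z i ω) / n + μ)}).toReal
      < 2 * Real.exp (-α ^ 2 * ν * n / M) := by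
  classical
  have hn' : (0:ℝ) < n := by exact_mod_cast hn
  obtain ⟨R, hRdef⟩ : ∃ R, R = Real.exp (-α ^ 2 * ν * ↑n / M) := ⟨_, rfl⟩
  rw [← hRdef]
  have hRpos : 0 < R := hRdef ▸ Real.exp_pos _
  obtain ⟨S, hSdef⟩ : ∃ S : Ω → ℝ, S = ∑ i, Z i := ⟨_, rfl⟩
  have hSapp : ∀ ω, S ω = ∑ i, Z i ω := fun ω => by simp [hSdef]
  have hSmeas : Measurable S := by
    have : S = fun ω => ∑ i, Z i ω := funext hSapp
    rw [this]
    exact Finset.measurable_sum _ (fun i _ => hmeas i)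
  have hS0 : ∀ ω, 0 ≤ S ω := fun ω => by
    rw [hSapp]; exact Finset.sum_nonneg fun i _ => (hbdd i ω).1
  have hSM : ∀ ω, S ω ≤ n * M := fun ω => by
    rw [hSapp]
    calc ∑ i, Z i ω ≤ ∑ _i : Fin n, M := Finset.sum_le_sum fun i _ => (hbdd i ω).2
    _ = n * M := by simp [mul_comm]
  have hμ0 : 0 ≤ μ := by
    rw [hμ ⟨0, hn⟩]
    exact integral_nonneg fun ω => (hbdd _ ω).1
  have hZint : ∀ i, Integrable (Z i) ℙ := fun i => by
    refine (integrable_const M).mono' (hmeas i).aestronglyMeasurable ?_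
    filter_upwards with ω
    rw [Real.norm_eq_abs, abs_of_nonneg (hbdd i ω).1]
    exact (hbdd i ω).2
  have hexpint : ∀ (t : ℝ) i, Integrable (fun ω => Real.exp (t * Z i ω)) ℙ := fun t i => by
    refine (integrable_const (Real.exp (|t| * M))).mono'
      ((hmeas i).const_mul t).exp.aestronglyMeasurable ?_
    filter_upwards with ω
    rw [Real.norm_eq_abs, abs_of_pos (Real.exp_pos _), Real.exp_le_exp]
    calc t * Z i ω ≤ |t * Z i ω| := le_abs_self _
    _ = |t| * |Z i ω| := abs_mul _ _
    _ ≤ |t| * M := by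
        apply mul_le_mul_of_nonneg_left _ (abs_nonneg t)
        rw [abs_of_nonneg (hbdd i ω).1]; exact (hbdd i ω).2
  have hexpintS : ∀ t : ℝ, Integrable (fun ω => Real.exp (t * S ω)) ℙ := fun t => by
    refine (integrable_const (Real.exp (|t| * (n * M)))).mono'
      (hSmeas.const_mul t).exp.aestronglyMeasurable ?_
    filter_upwards with ω
    rw [Real.norm_eq_abs, abs_of_pos (Real.exp_pos _), Real.exp_le_exp]
    calc t * S ω ≤ |t * S ω| := le_abs_self _
    _ = |t| * |S ω| := abs_mul _ _
    _ ≤ |t| * (n * M) := by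
        apply mul_le_mul_of_nonneg_left _ (abs_nonneg t)
        rw [abs_of_nonneg (hS0 ω)]; exact hSM ω
  -- single-variable mgf bound
  have hmgf_i : ∀ (t : ℝ) i, mgf (Z i) ℙ t ≤ Real.exp (μ / M * (Real.exp (t * M) - 1)) := by
    intro t i
    set c : ℝ := (Real.exp (t * M) - 1) / M with hcdef
    have hpt : ∀ ω, Real.exp (t * Z i ω) ≤ 1 + c * Z i ω := by
      intro ω
      obtain ⟨hz0, hzM⟩ := hbdd i ω
      have hb0 : 0 ≤ Z i ω / M := by positivity
      have ha0 : 0 ≤ 1 - Z i ω / M := by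
        rw [sub_nonneg, div_le_one hM]; exact hzM
      have hc := convexOn_exp.2 (Set.mem_univ (0:ℝ)) (Set.mem_univ (t * M)) ha0 hb0 (by ring)
      simp only [smul_eq_mul, mul_zero, Real.exp_zero, mul_one] at hc
      have harg : 0 + Z i ω / M * (t * M) = t * Z i ω := by
        field_simp
        ring
      rw [harg] at hc
      calc Real.exp (t * Z i ω) ≤ (1 - Z i ω / M) + Z i ω / M * Real.exp (t * M) := by
            simpa using hc
      _ = 1 + c * Z i ω := by rw [hcdef]; field_simp; ring
    have hint2 : Integrable (fun ω => 1 + c * Z i ω) ℙ :=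
      (integrable_const 1).add ((hZint i).const_mul c)
    calc mgf (Z i) ℙ t ≤ ∫ ω, (1 + c * Z i ω) ∂ℙ :=
          integral_mono (hexpint t i) hint2 hpt
    _ = 1 + c * μ := by
        rw [integral_add (integrable_const 1) ((hZint i).const_mul c),
          integral_const_mul, integral_const, ← hμ i]
        simp
    _ = (μ / M * (Real.exp (t * M) - 1)) + 1 := by rw [hcdef]; ring
    _ ≤ Real.exp (μ / M * (Real.exp (t * M) - 1)) := Real.add_one_le_exp _
  have hmgfS : ∀ t : ℝ, mgf S ℙ t ≤ Real.exp ((n : ℝ) * (μ / M * (Real.exp (t * M) - 1))) := by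
    intro t
    rw [hSdef, hindep.mgf_sum hmeas Finset.univ]
    calc ∏ i, mgf (Z i) ℙ t ≤ ∏ _i : Fin n, Real.exp (μ / M * (Real.exp (t * M) - 1)) :=
          Finset.prod_le_prod (fun i _ => mgf_nonneg) (fun i _ => hmgf_i t i)
    _ = Real.exp (μ / M * (Real.exp (t * M) - 1)) ^ n := by simp
    _ = Real.exp ((n : ℝ) * (μ / M * (Real.exp (t * M) - 1))) := (Real.exp_nat_mul _ n).symm
  rcases hμ0.eq_or_lt with hμz | hμpos
  · -- μ = 0 : the event is null
    have hz : ∀ i, ∀ᵐ ω ∂(ℙ : Measure Ω), Z i ω = 0 := by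
      intro i
      have h0 : ∫ ω, Z i ω ∂(ℙ : Measure Ω) = 0 := by rw [← hμ i, ← hμz]
      have := (integral_eq_zero_iff_of_nonneg (fun ω => (hbdd i ω).1) (hZint i)).mp h0
      filter_upwards [this] with ω hω using hω
    have hzS : ∀ᵐ ω ∂(ℙ : Measure Ω), (∑ i, Z i ω) = 0 := by
      have hall : ∀ᵐ ω ∂(ℙ : Measure Ω), ∀ i, Z i ω = 0 := ae_all_iff.mpr hz
      filter_upwards [hall] with ω h
      simp [h]
    have hnull : ℙ {ω | α < |(∑ i, Z i ω) / n - μ| / (ν + (∑ i, Z i ω) / n + μ)} = 0 := by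
      refine measure_mono_null ?_ (ae_iff.mp hzS)
      intro ω hω
      simp only [Set.mem_setOf_eq] at hω ⊢
      intro hzero
      rw [hzero, ← hμz] at hω
      norm_num at hω
      linarith
    rw [hnull]
    simp only [ENNReal.toReal_zero]
    linarith [hRpos]
  · -- μ > 0
    obtain ⟨u, hudef⟩ : ∃ u : ℝ, u = ((1 + α) * μ + α * ν) / (1 - α) := ⟨_, rfl⟩
    have h1α : (0:ℝ) < 1 - α := by linarith
    have h1α' : (0:ℝ) < 1 + α := by linarith
    have hsub : {ω | α < |(∑ i, Z i ω) / n - μ| / (ν + (∑ i, Z i ω) / n + μ)} ⊆ {ω | (n : ℝ) * u ≤ S ω} ∪ {ω | (1 + α) * (S ω / n) < (1 - α) * μ - α * ν} := by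
      intro ω hω
      simp only [Set.mem_setOf_eq] at hω
      have he0 : 0 ≤ (∑ i, Z i ω) / n :=
        div_nonneg (Finset.sum_nonneg fun i _ => (hbdd i ω).1) hn'.le
      have hD : 0 < ν + (∑ i, Z i ω) / n + μ := by linarith
      rw [lt_div_iff₀ hD] at hω
      rcases lt_abs.mp hω with h | h
      · left
        show (n : ℝ) * u ≤ S ω
        have hue : u ≤ (∑ i, Z i ω) / n := by
          rw [hudef, div_le_iff₀ h1α]
          nlinarith
        have : S ω = (∑ i, Z i ω) / n * n := by
          rw [hSapp]; field_simp
        rw [this]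
        calc (n : ℝ) * u ≤ (n : ℝ) * ((∑ i, Z i ω) / n) :=
              mul_le_mul_of_nonneg_left hue hn'.le
        _ = (∑ i, Z i ω) / n * n := by ring
      · right
        show (1 + α) * (S ω / n) < (1 - α) * μ - α * ν
        rw [hSapp]
        nlinarith
    have hμne : μ ≠ 0 := ne_of_gt hμpos
    have hupos : 0 < u := by
      rw [hudef]; apply div_pos _ h1α; nlinarith
    have huμ : μ < u := by
      rw [hudef, lt_div_iff₀ h1α]; nlinarith
    have hA : (ℙ {ω | (n : ℝ) * u ≤ S ω}).toReal < R := by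
      obtain ⟨t, htdef⟩ : ∃ t : ℝ, t = Real.log (u / μ) / M := ⟨_, rfl⟩
      have ht0 : 0 ≤ t := by
        rw [htdef]
        exact div_nonneg (Real.log_nonneg ((one_le_div hμpos).mpr huμ.le)) hM.le
      have hetM : Real.exp (t * M) = u / μ := by
        rw [htdef, div_mul_cancel₀ _ (ne_of_gt hM)]
        exact Real.exp_log (by positivity)
      have h1 := measure_ge_le_exp_mul_mgf (X := S) (μ := ℙ) ((n:ℝ) * u) ht0 (hexpintS t)
      have h2 : Real.exp (-t * ((n:ℝ) * u)) * mgf S ℙ t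
          ≤ Real.exp (-t * ((n:ℝ) * u) + (n:ℝ) * (μ / M * (Real.exp (t * M) - 1))) := by
        rw [Real.exp_add]
        exact mul_le_mul_of_nonneg_left (hmgfS t) (Real.exp_pos _).le
      have hkey : α ^ 2 * ν < u * Real.log (u / μ) - u + μ := by
        have hx1 : 1 ≤ u / μ := (one_le_div hμpos).mpr huμ.le
        have hlog := xlog_ge_one hx1
        have hmul := mul_le_mul_of_nonneg_left hlog hμpos.le
        have e1 : μ * ((u / μ - 1) ^ 2 / (2 * (u / μ))) = (u - μ) ^ 2 / (2 * u) := by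
          field_simp
        have e2 : μ * (u / μ * Real.log (u / μ) - u / μ + 1)
            = u * Real.log (u / μ) - u + μ := by
          field_simp
        rw [e1, e2] at hmul
        have h5 : α ^ 2 * ν < (u - μ) ^ 2 / (2 * u) := by
          rw [lt_div_iff₀ (by positivity)]
          have e3 : (u - μ) * (1 - α) = α * (2 * μ + ν) := by
            rw [hudef]; field_simp; ring
          have e4 : u * (1 - α) = (1 + α) * μ + α * ν := by
            rw [hudef]; field_simp
          have hfin : α ^ 2 * ν * (2 * u) * (1 - α) ^ 2 < (u - μ) ^ 2 * (1 - α) ^ 2 := by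
            have l1 : α ^ 2 * ν * (2 * u) * (1 - α) ^ 2
                = 2 * α ^ 2 * ν * (1 - α) * (u * (1 - α)) := by ring
            have l2 : (u - μ) ^ 2 * (1 - α) ^ 2 = ((u - μ) * (1 - α)) ^ 2 := by ring
            rw [l1, l2, e3, e4]
            nlinarith [sq_nonneg (α * μ), sq_nonneg (α * (1 - α) * ν), sq_nonneg (α * α * ν),
              mul_pos (mul_pos hα hα) (mul_pos hμpos hν),
              mul_pos (mul_pos (mul_pos hα hα) (mul_pos hα hα)) (mul_pos hμpos hν)]
          exact lt_of_mul_lt_mul_right hfin (sq_nonneg _)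
        linarith
      have h3 : -t * ((n:ℝ) * u) + (n:ℝ) * (μ / M * (Real.exp (t * M) - 1))
          < -α ^ 2 * ν * n / M := by
        rw [hetM]
        have e5 : -t * ((n:ℝ) * u) + (n:ℝ) * (μ / M * (u / μ - 1))
            = (n:ℝ) / M * (-(u * Real.log (u / μ)) + u - μ) := by
          rw [htdef]; field_simp; ring
        have e6 : -α ^ 2 * ν * (n:ℝ) / M = (n:ℝ) / M * (-(α ^ 2 * ν)) := by ring
        rw [e5, e6]
        apply mul_lt_mul_of_pos_left _ (by positivity)
        linarith
      calc (ℙ {ω | (n : ℝ) * u ≤ S ω}).toReal ≤ Real.exp (-t * ((n:ℝ) * u)) * mgf S ℙ t := h1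
      _ ≤ Real.exp (-t * ((n:ℝ) * u) + (n:ℝ) * (μ / M * (Real.exp (t * M) - 1))) := h2
      _ < R := by rw [hRdef]; exact Real.exp_lt_exp.mpr h3
    have hB : (ℙ {ω | (1 + α) * (S ω / n) < (1 - α) * μ - α * ν}).toReal < R := by
      by_cases hBc : (1 - α) * μ - α * ν ≤ 0
      · have hempty : {ω | (1 + α) * (S ω / n) < (1 - α) * μ - α * ν} = (∅ : Set Ω) := by
          ext ω
          simp only [Set.mem_setOf_eq, Set.mem_empty_iff_false, iff_false, not_lt]
          have h0 : 0 ≤ (1 + α) * (S ω / n) :=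
            mul_nonneg h1α'.le (div_nonneg (hS0 ω) hn'.le)
          linarith
        rw [hempty]
        simpa using hRpos
      · push_neg at hBc
        obtain ⟨m, hmdef⟩ : ∃ m : ℝ, m = ((1 - α) * μ - α * ν) / (1 + α) := ⟨_, rfl⟩
        have hm0 : 0 < m := by rw [hmdef]; exact div_pos hBc h1α'
        have hmμ : m < μ := by
          rw [hmdef, div_lt_iff₀ h1α']; nlinarith
        obtain ⟨t, htdef⟩ : ∃ t : ℝ, t = Real.log (m / μ) / M := ⟨_, rfl⟩
        have ht0 : t ≤ 0 := by
          rw [htdef]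
          exact div_nonpos_of_nonpos_of_nonneg
            (Real.log_nonpos (div_nonneg hm0.le hμpos.le)
              (by rw [div_le_one hμpos]; exact hmμ.le)) hM.le
        have hetM : Real.exp (t * M) = m / μ := by
          rw [htdef, div_mul_cancel₀ _ (ne_of_gt hM)]
          exact Real.exp_log (div_pos hm0 hμpos)
        have hsub2 : {ω | (1 + α) * (S ω / n) < (1 - α) * μ - α * ν} ⊆ {ω | S ω ≤ (n:ℝ) * m} := by
          intro ω hω
          simp only [Set.mem_setOf_eq] at hω ⊢
          have hlt : S ω / n < m := by
            rw [hmdef, lt_div_iff₀ h1α']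
            linarith [hω]
          have hle := mul_le_mul_of_nonneg_left hlt.le hn'.le
          calc S ω = (n:ℝ) * (S ω / n) := by field_simp
          _ ≤ (n:ℝ) * m := hle
        have h1 := measure_le_le_exp_mul_mgf (X := S) (μ := ℙ) ((n:ℝ) * m) ht0 (hexpintS t)
        have h2 : Real.exp (-t * ((n:ℝ) * m)) * mgf S ℙ t
            ≤ Real.exp (-t * ((n:ℝ) * m) + (n:ℝ) * (μ / M * (Real.exp (t * M) - 1))) := by
          rw [Real.exp_add]
          exact mul_le_mul_of_nonneg_left (hmgfS t) (Real.exp_pos _).le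
        have hkey : α ^ 2 * ν < m * Real.log (m / μ) - m + μ := by
          have hx : m / μ ≤ 1 := by rw [div_le_one hμpos]; exact hmμ.le
          have hlog := xlog_le_one (by positivity) hx
          have hmul := mul_le_mul_of_nonneg_left hlog hμpos.le
          have e1 : μ * ((m / μ - 1) ^ 2 / 2) = (μ - m) ^ 2 / (2 * μ) := by
            field_simp
            ring
          have e2 : μ * (m / μ * Real.log (m / μ) - m / μ + 1)
              = m * Real.log (m / μ) - m + μ := by
            field_simp
          rw [e1, e2] at hmul
          have h5 : α ^ 2 * ν < (μ - m) ^ 2 / (2 * μ) := by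
            rw [lt_div_iff₀ (by positivity)]
            have e3 : (μ - m) * (1 + α) = α * (2 * μ + ν) := by
              rw [hmdef]; field_simp; ring
            have hfin : α ^ 2 * ν * (2 * μ) * (1 + α) ^ 2 < (μ - m) ^ 2 * (1 + α) ^ 2 := by
              have l2 : (μ - m) ^ 2 * (1 + α) ^ 2 = ((μ - m) * (1 + α)) ^ 2 := by ring
              rw [l2, e3]
              nlinarith [sq_nonneg (α * (2 * μ - ν)),
                mul_pos (mul_pos (mul_pos hα hα) (mul_pos hμpos hν)) h1α,
                mul_pos (mul_pos (mul_pos (mul_pos hα hα) (mul_pos hμpos hν)) h1α) h1α']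
            exact lt_of_mul_lt_mul_right hfin (sq_nonneg _)
          linarith
        have h3 : -t * ((n:ℝ) * m) + (n:ℝ) * (μ / M * (Real.exp (t * M) - 1))
            < -α ^ 2 * ν * n / M := by
          rw [hetM]
          have e5 : -t * ((n:ℝ) * m) + (n:ℝ) * (μ / M * (m / μ - 1))
              = (n:ℝ) / M * (-(m * Real.log (m / μ)) + m - μ) := by
            rw [htdef]; field_simp; ring
          have e6 : -α ^ 2 * ν * (n:ℝ) / M = (n:ℝ) / M * (-(α ^ 2 * ν)) := by ring
          rw [e5, e6]
          apply mul_lt_mul_of_pos_left _ (by positivity)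
          linarith
        calc (ℙ {ω | (1 + α) * (S ω / n) < (1 - α) * μ - α * ν}).toReal
            ≤ (ℙ {ω | S ω ≤ (n:ℝ) * m}).toReal :=
              ENNReal.toReal_mono (measure_ne_top _ _) (measure_mono hsub2)
        _ ≤ Real.exp (-t * ((n:ℝ) * m)) * mgf S ℙ t := h1
        _ ≤ Real.exp (-t * ((n:ℝ) * m) + (n:ℝ) * (μ / M * (Real.exp (t * M) - 1))) := h2
        _ < R := by rw [hRdef]; exact Real.exp_lt_exp.mpr h3
    calc (ℙ {ω | α < |(∑ i, Z i ω) / n - μ| / (ν + (∑ i, Z i ω) / n + μ)}).toReal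
        ≤ (ℙ ({ω | (n : ℝ) * u ≤ S ω}
            ∪ {ω | (1 + α) * (S ω / n) < (1 - α) * μ - α * ν})).toReal :=
          ENNReal.toReal_mono (measure_ne_top _ _) (measure_mono hsub)
    _ ≤ (ℙ {ω | (n : ℝ) * u ≤ S ω} + ℙ {ω | (1 + α) * (S ω / n) < (1 - α) * μ - α * ν}).toReal :=
          ENNReal.toReal_mono
            (ENNReal.add_ne_top.mpr ⟨measure_ne_top _ _, measure_ne_top _ _⟩)
            (measure_union_le _ _)
    _ ≤ (ℙ {ω | (n : ℝ) * u ≤ S ω}).toReal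
          + (ℙ {ω | (1 + α) * (S ω / n) < (1 - α) * μ - α * ν}).toReal := ENNReal.toReal_add_le
    _ < R + R := add_lt_add hA hB
    _ = 2 * R := by ring
end

section
/- Let Z_1,...,Z_n be i.i.d. random variables with 0 ≤ Z_i ≤ M, mean μ, and empirical mean μ̂. For any ν > 0 and 0 < α < 1, P( μ < ((1-α)/(1+α))·μ̂ - (α/(1+α))·ν ) < 2·exp(-α²νn/M). -/
open MeasureTheory ProbabilityTheory

lemma exp_le_quad {x : ℝ} (h0 : 0 ≤ x) (h1 : x ≤ 1) :
    Real.exp x ≤ 1 + x + x ^ 2 := by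
  have h := Real.exp_bound' h0 h1 (n := 2) (by norm_num)
  simp [Finset.sum_range_succ] at h
  nlinarith [sq_nonneg x]

/-- Consequence of Haussler's bound: for i.i.d. `Z₁,…,Zₙ` with `0 ≤ Zᵢ ≤ M`, mean `μ`
and empirical mean `μ̂`, and any `ν > 0`, `0 < α < 1`,
`P(μ < ((1-α)/(1+α))·μ̂ - (α/(1+α))·ν) < 2·exp(-α²·ν·n/M)`. -/
theorem haussler_bound_consequence
    {Ω : Type*} [MeasureSpace Ω] [IsProbabilityMeasure (ℙ : Measure Ω)]
    (n : ℕ) (hn : 0 < n) (M : ℝ) (hM : 0 < M)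
    (Z : Fin n → Ω → ℝ)
    (hmeas : ∀ i, Measurable (Z i))
    (hbdd : ∀ i, ∀ ω, 0 ≤ Z i ω ∧ Z i ω ≤ M)
    (hindep : iIndepFun Z ℙ)
    (hident : ∀ i j, IdentDistrib (Z i) (Z j) ℙ ℙ)
    (μ : ℝ) (hμ : ∀ i, μ = ∫ ω, Z i ω)
    (ν α : ℝ) (hν : 0 < ν) (hα : 0 < α) (hα1 : α < 1) :
    (ℙ {ω | μ < (1 - α) / (1 + α) * ((∑ i, Z i ω) / n) - α / (1 + α) * ν}).toReal
      < 2 * Real.exp (-α ^ 2 * ν * n / M) := by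
  have hn' : (0:ℝ) < n := by exact_mod_cast hn
  have hlpos : (0:ℝ) < α / M := div_pos hα hM
  set l : ℝ := α / M with hl
  have hlM : l * M = α := by rw [hl]; exact div_mul_cancel₀ α hM.ne'
  -- basic facts about μ
  have i0 : Fin n := ⟨0, hn⟩
  have hμ0 : 0 ≤ μ := by
    rw [hμ i0]
    exact integral_nonneg (fun ω => (hbdd i0 ω).1)
  -- integrability of Z i
  have hintZ : ∀ i, Integrable (Z i) ℙ := by
    intro i
    refine (integrable_const M).mono' (hmeas i).aestronglyMeasurable ?_
    exact Filter.Eventually.of_forall fun ω => by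
      rw [Real.norm_eq_abs, abs_of_nonneg (hbdd i ω).1]; exact (hbdd i ω).2
  -- integrability of exp (l * Z i)
  have hintE : ∀ i, Integrable (fun ω => Real.exp (l * Z i ω)) ℙ := by
    intro i
    refine (integrable_const (Real.exp (l * M))).mono'
      ((hmeas i).const_mul l).exp.aestronglyMeasurable ?_
    refine Filter.Eventually.of_forall fun ω => ?_
    rw [Real.norm_eq_abs, abs_of_pos (Real.exp_pos _)]
    exact Real.exp_le_exp.2 (mul_le_mul_of_nonneg_left (hbdd i ω).2 hlpos.le)
  -- pointwise convexity bound : exp (l * z) ≤ 1 + z * (exp α - 1)/M for z ∈ [0, M]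
  have hconv : ∀ z : ℝ, 0 ≤ z → z ≤ M →
      Real.exp (l * z) ≤ 1 + z * (Real.exp α - 1) / M := by
    intro z hz0 hzM
    have hθ0 : 0 ≤ z / M := div_nonneg hz0 hM.le
    have hθ1 : z / M ≤ 1 := (div_le_one hM).2 hzM
    have := convexOn_exp.2 (Set.mem_univ (0:ℝ)) (Set.mem_univ α)
      (by linarith : (0:ℝ) ≤ 1 - z / M) hθ0 (by ring)
    simp only [smul_eq_mul, mul_zero, zero_add, Real.exp_zero] at this
    have harg : z / M * α = l * z := by field_simp [hl]; rw [← hlM]; ring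
    rw [harg] at this
    calc Real.exp (l * z) ≤ (1 - z / M) * 1 + z / M * Real.exp α := this
      _ = 1 + z * (Real.exp α - 1) / M := by field_simp; ring
  -- mgf bound per coordinate
  have hmgf : ∀ i, mgf (Z i) ℙ l ≤ Real.exp (μ * (Real.exp α - 1) / M) := by
    intro i
    have h1 : mgf (Z i) ℙ l ≤ ∫ ω, (1 + Z i ω * (Real.exp α - 1) / M) ∂ℙ := by
      refine integral_mono (hintE i) ?_ ?_
      · exact (integrable_const 1).add (((hintZ i).mul_const _).div_const _)
      · intro ω; exact hconv _ (hbdd i ω).1 (hbdd i ω).2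
    have h2 : ∫ ω, (1 + Z i ω * (Real.exp α - 1) / M) ∂ℙ
        = 1 + μ * (Real.exp α - 1) / M := by
      rw [integral_add (integrable_const 1) (((hintZ i).mul_const _).div_const _)]
      simp [integral_div, integral_mul_const, ← hμ i]
    calc mgf (Z i) ℙ l ≤ 1 + μ * (Real.exp α - 1) / M := h1.trans_eq h2
      _ ≤ Real.exp (μ * (Real.exp α - 1) / M) := by
          linarith [Real.add_one_le_exp (μ * (Real.exp α - 1) / M)]
  -- threshold
  set ε : ℝ := n * ((1 + α) * μ + α * ν) / (1 - α) with hε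
  -- inclusion of events
  have hsub : {ω | μ < (1 - α) / (1 + α) * ((∑ i, Z i ω) / n) - α / (1 + α) * ν}
      ⊆ {ω | ε ≤ (∑ i, Z i) ω} := by
    intro ω hω
    simp only [Set.mem_setOf_eq] at hω ⊢
    rw [Finset.sum_apply]
    set s := ∑ i, Z i ω with hs
    have hA : (0:ℝ) < 1 + α := by linarith
    have hB : (0:ℝ) < 1 - α := by linarith
    have h1 : (1 + α) * μ + α * ν < (1 - α) * (s / n) := by
      rw [div_mul_eq_mul_div, div_mul_eq_mul_div, ← sub_div, lt_div_iff₀ hA] at hω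
      linarith
    have h2 : ((1 + α) * μ + α * ν) / (1 - α) < s / n := by
      rw [div_lt_iff₀ hB]
      calc (1 + α) * μ + α * ν < (1 - α) * (s / n) := h1
        _ = s / n * (1 - α) := by ring
    calc ε = n * (((1 + α) * μ + α * ν) / (1 - α)) := by rw [hε, mul_div_assoc]
      _ ≤ n * (s / n) := by exact mul_le_mul_of_nonneg_left h2.le hn'.le
      _ = s := by field_simp
  -- Chernoff
  have hmeasS : Measurable (fun ω => ∑ i, Z i ω) :=
    Finset.measurable_sum Finset.univ fun i _ => hmeas i
  have hintS : Integrable (fun ω => Real.exp (l * (∑ i, Z i) ω)) ℙ := by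
    simp only [Finset.sum_apply]
    refine (integrable_const (Real.exp (l * (n * M)))).mono'
      (hmeasS.const_mul l).exp.aestronglyMeasurable ?_
    refine Filter.Eventually.of_forall fun ω => ?_
    rw [Real.norm_eq_abs, abs_of_pos (Real.exp_pos _)]
    refine Real.exp_le_exp.2 (mul_le_mul_of_nonneg_left ?_ hlpos.le)
    calc ∑ i, Z i ω ≤ ∑ _i : Fin n, M := Finset.sum_le_sum fun i _ => (hbdd i ω).2
      _ = n * M := by simp [mul_comm]
  have hcher := measure_ge_le_exp_mul_mgf (μ := ℙ) (X := ∑ i, Z i) ε hlpos.le hintS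
  have hmgfS : mgf (∑ i, Z i) ℙ l = ∏ i, mgf (Z i) ℙ l :=
    hindep.mgf_sum hmeas Finset.univ
  have hprod : ∏ i, mgf (Z i) ℙ l ≤ Real.exp (μ * (Real.exp α - 1) / M) ^ n := by
    calc ∏ i, mgf (Z i) ℙ l ≤ ∏ _i : Fin n, Real.exp (μ * (Real.exp α - 1) / M) :=
          Finset.prod_le_prod (fun i _ => mgf_nonneg) (fun i _ => hmgf i)
      _ = Real.exp (μ * (Real.exp α - 1) / M) ^ n := by simp
  have hmono : (ℙ {ω | μ < (1 - α) / (1 + α) * ((∑ i, Z i ω) / n) - α / (1 + α) * ν}).toReal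
      ≤ (ℙ {ω | ε ≤ (∑ i, Z i) ω}).toReal :=
    ENNReal.toReal_mono (measure_ne_top _ _) (measure_mono hsub)
  have hexp : Real.exp (-l * ε) * Real.exp (μ * (Real.exp α - 1) / M) ^ n
      ≤ Real.exp (-α ^ 2 * ν * n / M) := by
    rw [← Real.exp_nat_mul, ← Real.exp_add, Real.exp_le_exp]
    have hexpb : Real.exp α ≤ 1 + α + α ^ 2 := exp_le_quad hα.le hα1.le
    have hB : (0:ℝ) < 1 - α := by linarith
    rw [hl, hε]
    have expand : -(α / M) * ((n:ℝ) * ((1 + α) * μ + α * ν) / (1 - α))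
          + (n:ℝ) * (μ * (Real.exp α - 1) / M)
        = ((n:ℝ) / (M * (1 - α)))
            * (μ * (Real.exp α - 1) * (1 - α) - α * ((1 + α) * μ + α * ν)) := by
      field_simp
      ring
    have target : -α ^ 2 * ν * (n:ℝ) / M
        = ((n:ℝ) / (M * (1 - α))) * (-(α ^ 2 * ν) * (1 - α)) := by
      field_simp
    rw [expand, target]
    refine mul_le_mul_of_nonneg_left ?_ (by positivity)
    nlinarith [mul_nonneg (mul_nonneg hμ0 hB.le) (sub_nonneg.2 hexpb),
      mul_pos (mul_pos (mul_pos hα hα) hα) hν,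
      mul_nonneg (mul_nonneg (mul_nonneg hα.le hα.le) hμ0) (by linarith : (0:ℝ) ≤ 1 + α)]
  have hpos : 0 < Real.exp (-α ^ 2 * ν * n / M) := Real.exp_pos _
  calc (ℙ {ω | μ < (1 - α) / (1 + α) * ((∑ i, Z i ω) / n) - α / (1 + α) * ν}).toReal
      ≤ Real.exp (-l * ε) * mgf (∑ i, Z i) ℙ l := hmono.trans hcher
    _ ≤ Real.exp (-α ^ 2 * ν * n / M) := by
        rw [hmgfS]
        exact (mul_le_mul_of_nonneg_left hprod (Real.exp_pos _).le).trans hexp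
    _ < 2 * Real.exp (-α ^ 2 * ν * n / M) := by linarith
end

section
/- If a δ-approximate initial upper bound U₀ satisfies U₀(b) ≥ V̂*(b) - δ for all nodes b, and the corrected bound U'₀(b) = U₀(b) + δ is propagated through Bellman backup equations of the form ν̄'(b) = max{ν̲₀(b), max_a {ρ(b,a) + ∑_z ν̄'(τ(b,a,z))}}, then by induction on tree depth, ν̄(b) + γ^{Δ(b)}·(|Φ_b|/K)·δ ≥ ν̄'(b) ≥ ν*(b) for every node b, where ν̄ is the bound computed from U₀. -/
/-- If the `δ`-approximate initial upper bound `U₀(b) ≥ V̂*(b) - δ` is corrected to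
`U'₀(b) = U₀(b) + δ` and propagated through the Bellman backup equations, then by
induction on tree depth `ν̄(b) + γ^{Δ(b)}·(|Φ_b|/K)·δ ≥ ν̄'(b) ≥ ν*(b)` for every node
`b`, where `ν̄` is the bound computed from `U₀`. -/
theorem corrected_upper_bound_dominates
    {B A Z : Type*} [Fintype A] [Nonempty A]
    (child : B → A → Z → B)           -- the child node τ(b,a,z)
    (Zb : B → A → Finset Z)           -- observation branches present under action a
    (leaf : B → Prop)
    (ht : B → ℕ)                      -- height, for induction on tree depth
    (hht : ∀ b a z, z ∈ Zb b a → ht (child b a z) < ht b)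
    (Δ : B → ℕ) (w : B → ℝ) (γ lam δ : ℝ)
    (U₀ Vhatstar νlo₀ νstar νup νup' : B → ℝ) (ρ : B → A → ℝ)
    (hγ : 0 ≤ γ) (hγ1 : γ < 1) (hδ : 0 ≤ δ) (hw : ∀ b, 0 ≤ w b)
    (hΔ : ∀ b a z, z ∈ Zb b a → Δ (child b a z) = Δ b + 1)
    (hwsum : ∀ b a, ¬ leaf b → ∑ z ∈ Zb b a, w (child b a z) = w b)
    -- U₀ is δ-approximate
    (hU₀ : ∀ b, Vhatstar b - δ ≤ U₀ b)
    -- leaf initialization of ν̄ from U₀ and of ν̄' from U'₀ = U₀ + δ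
    (hleaf : ∀ b, leaf b →
      νup b = max (νlo₀ b) (w b * γ ^ (Δ b) * U₀ b - lam))
    (hleaf' : ∀ b, leaf b →
      νup' b = max (νlo₀ b) (w b * γ ^ (Δ b) * (U₀ b + δ) - lam))
    -- Bellman backup at internal nodes, for both ν̄ and ν̄'
    (hbackup : ∀ b, ¬ leaf b →
      νup b = max (νlo₀ b)
        (Finset.univ.sup' Finset.univ_nonempty
          (fun a => ρ b a + ∑ z ∈ Zb b a, νup (child b a z))))
    (hbackup' : ∀ b, ¬ leaf b →
      νup' b = max (νlo₀ b)
        (Finset.univ.sup' Finset.univ_nonempty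
          (fun a => ρ b a + ∑ z ∈ Zb b a, νup' (child b a z))))
    -- the optimal RWDU satisfies the Bellman inequalities with the exact value V̂*
    (hstar_leaf : ∀ b, leaf b →
      νstar b ≤ max (νlo₀ b) (w b * γ ^ (Δ b) * Vhatstar b - lam))
    (hstar : ∀ b, ¬ leaf b →
      νstar b ≤ max (νlo₀ b)
        (Finset.univ.sup' Finset.univ_nonempty
          (fun a => ρ b a + ∑ z ∈ Zb b a, νstar (child b a z)))) :
    ∀ b, νup' b ≤ νup b + γ ^ (Δ b) * w b * δ ∧ νstar b ≤ νup' b := by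

  suffices H : ∀ N b, ht b < N → νup' b ≤ νup b + γ ^ (Δ b) * w b * δ ∧ νstar b ≤ νup' b by
    intro b; exact H (ht b + 1) b (Nat.lt_succ_self _)
  intro N
  induction N with
  | zero => intro b hb; omega
  | succ N IH =>
    intro b hb
    have hC : 0 ≤ γ ^ (Δ b) * w b * δ :=
      mul_nonneg (mul_nonneg (pow_nonneg hγ _) (hw b)) hδ
    by_cases hl : leaf b
    · constructor
      · rw [hleaf b hl, hleaf' b hl]
        have heq : w b * γ ^ (Δ b) * (U₀ b + δ) - lam
            = (w b * γ ^ (Δ b) * U₀ b - lam) + γ ^ (Δ b) * w b * δ := by ring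
        rw [heq]
        exact max_le (le_trans (le_max_left _ _) (le_add_of_nonneg_right hC))
          (add_le_add_left (le_max_right _ _) _)
      · rw [hleaf' b hl]
        refine le_trans (hstar_leaf b hl) (max_le_max le_rfl ?_)
        have hV : Vhatstar b ≤ U₀ b + δ := by linarith [hU₀ b]
        have : w b * γ ^ (Δ b) * Vhatstar b ≤ w b * γ ^ (Δ b) * (U₀ b + δ) :=
          mul_le_mul_of_nonneg_left hV (mul_nonneg (hw b) (pow_nonneg hγ _))
        linarith
    · have hchild : ∀ a, ∀ z ∈ Zb b a,
          νup' (child b a z) ≤ νup (child b a z) + γ ^ (Δ (child b a z)) * w (child b a z) * δ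
          ∧ νstar (child b a z) ≤ νup' (child b a z) := by
        intro a z hz
        exact IH (child b a z) (by have := hht b a z hz; omega)
      constructor
      · rw [hbackup b hl, hbackup' b hl]
        refine max_le (le_trans (le_max_left _ _) (le_add_of_nonneg_right hC)) ?_
        refine le_trans (Finset.sup'_le _ _ fun a _ => ?_)
          (add_le_add_left (le_max_right _ _) _)
        have h1 : ∑ z ∈ Zb b a, νup' (child b a z)
            ≤ ∑ z ∈ Zb b a, (νup (child b a z) + γ ^ (Δ (child b a z)) * w (child b a z) * δ) :=
          Finset.sum_le_sum fun z hz => by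
            linarith [(hchild a z hz).1]
        have h2 : ∑ z ∈ Zb b a, (νup (child b a z) + γ ^ (Δ (child b a z)) * w (child b a z) * δ)
            = (∑ z ∈ Zb b a, νup (child b a z)) + γ ^ (Δ b + 1) * w b * δ := by
          rw [Finset.sum_add_distrib]
          congr 1
          have : ∀ z ∈ Zb b a, γ ^ (Δ (child b a z)) * w (child b a z) * δ
              = γ ^ (Δ b + 1) * δ * w (child b a z) := by
            intro z hz; rw [hΔ b a z hz]; ring
          rw [Finset.sum_congr rfl this, ← Finset.mul_sum, hwsum b a hl]; ring
        have h3 : γ ^ (Δ b + 1) * w b * δ ≤ γ ^ (Δ b) * w b * δ := by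
          have hp : γ ^ (Δ b + 1) ≤ γ ^ (Δ b) :=
            pow_le_pow_of_le_one hγ (le_of_lt hγ1) (Nat.le_succ _)
          exact mul_le_mul_of_nonneg_right (mul_le_mul_of_nonneg_right hp (hw b)) hδ
        have h4 : ρ b a + ∑ z ∈ Zb b a, νup' (child b a z)
            ≤ (ρ b a + ∑ z ∈ Zb b a, νup (child b a z)) + γ ^ (Δ b) * w b * δ := by
          linarith
        exact le_trans h4 (add_le_add_left
          (Finset.le_sup' (fun a => ρ b a + ∑ z ∈ Zb b a, νup (child b a z))
            (Finset.mem_univ a)) _)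
      · rw [hbackup' b hl]
        refine le_trans (hstar b hl) (max_le_max le_rfl ?_)
        refine Finset.sup'_le _ _ fun a _ => ?_
        refine le_trans (add_le_add_right (Finset.sum_le_sum fun z hz => (hchild a z hz).2) _) ?_
        exact Finset.le_sup' (fun a => ρ b a + ∑ z ∈ Zb b a, νup' (child b a z))
          (Finset.mem_univ a)
end

section
/- A DESPOT of height D constructed from K sampled scenarios, where each node has at most |A| action branches and under each action the K scenarios are partitioned among the resulting observation branches, has at most O(|A|^D · K) belief nodes; precisely, the number of nodes at depth d is at most |A|^d · K, so the total number of nodes is at most K·(|A|^{D+1}-1)/(|A|-1) for |A| ≥ 2. -/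
lemma geom_nat (A n : ℕ) (hA : 2 ≤ A) :
    ∑ d ∈ Finset.range n, A ^ d = (A ^ n - 1) / (A - 1) := by
  have h1 : 1 ≤ A := by omega
  have key : (A - 1) * ∑ d ∈ Finset.range n, A ^ d = A ^ n - 1 := by
    induction n with
    | zero => simp
    | succ n ih =>
      rw [Finset.sum_range_succ, Nat.mul_add, ih]
      have hpow : 1 ≤ A ^ n := Nat.one_le_pow _ _ (by omega)
      have : (A - 1) * A ^ n = A ^ (n+1) - A ^ n := by
        rw [Nat.sub_mul, one_mul, pow_succ, mul_comm]
      rw [this]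
      have hpow2 : A ^ n ≤ A ^ (n+1) := Nat.pow_le_pow_right (by omega) (by omega)
      omega
  rw [← key, Nat.mul_div_cancel_left _ (by omega)]

/-- Size of a DESPOT: if the root holds `K` scenarios (`S 0 = K`, `N 0 = 1`), every
node holds at least one scenario (`N d ≤ S d`), and under each of the `|A| ≥ 2` action
branches the scenarios of a node are partitioned among its observation children
(`S (d+1) ≤ |A| * S d`), then the number of nodes at depth `d` is at most `|A|^d·K`
and the total number of nodes up to depth `D` is at most `K·(|A|^{D+1}-1)/(|A|-1)`. -/
theorem despot_size_bound
    (A K D : ℕ) (hA : 2 ≤ A) (hK : 1 ≤ K)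
    (N S : ℕ → ℕ)                 -- node count and total scenario count at each depth
    (hS0 : S 0 = K) (hN0 : N 0 = 1)
    (hNS : ∀ d, N d ≤ S d)
    (hSrec : ∀ d, S (d + 1) ≤ A * S d) :
    (∀ d, d ≤ D → N d ≤ A ^ d * K) ∧
    (∑ d ∈ Finset.range (D + 1), N d) ≤ K * ((A ^ (D + 1) - 1) / (A - 1)) := by
  have hSd : ∀ d, S d ≤ A ^ d * K := by
    intro d
    induction d with
    | zero => simp [hS0]
    | succ d ih =>
      calc S (d+1) ≤ A * S d := hSrec d
        _ ≤ A * (A ^ d * K) := Nat.mul_le_mul_left _ ih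
        _ = A ^ (d+1) * K := by ring
  have hNd : ∀ d, N d ≤ A ^ d * K := fun d => (hNS d).trans (hSd d)
  refine ⟨fun d _ => hNd d, ?_⟩
  calc ∑ d ∈ Finset.range (D+1), N d
      ≤ ∑ d ∈ Finset.range (D+1), A ^ d * K :=
        Finset.sum_le_sum fun d _ => hNd d
    _ = K * ∑ d ∈ Finset.range (D+1), A ^ d := by
        rw [Finset.mul_sum]; exact Finset.sum_congr rfl fun d _ => mul_comm _ _
    _ = K * ((A ^ (D+1) - 1) / (A - 1)) := by rw [geom_nat A (D+1) hA]
end
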